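/- For a shortest feasible swap sequence on a path graph for a chain poset with k elements, the signature length (the number of distinct realization times plus the number of times the left-to-right order of the at most 2k involved tokens changes) is at most ((2k)! + 1) * k. -/

import Mathlib

/-- A single swap on the path with vertices `{0, …, n-1}` (edges `{i, i+1}`). -/
def AdjSwap {n : ℕ} {T : Type*} [DecidableEq T] (f g : Fin n ≃ T) : Prop :=
  ∃ i j : Fin n, (i : ℕ) + 1 = (j : ℕ) ∧ g = (Equiv.swap i j).trans f

/-- `F 0 ~> ⋯ ~> F l` is a swap sequence on the path. -/
def SwapSeq {n : ℕ} {T : Type*} [DecidableEq T] (l : ℕ) (F : ℕ → (Fin n ≃ T)) : Prop :=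
  ∀ j, j < l → AdjSwap (F j) (F (j + 1))

/-- A token is *involved* if it occurs in one of the `k` gate pairs `q 0, …, q (k-1)`
of the chain; there are at most `2k` involved tokens. -/
def Involved {k : ℕ} {T : Type*} (q : Fin k → T × T) (a : T) : Prop :=
  ∃ i, a = (q i).1 ∨ a = (q i).2

/-- Two placements induce the same left-to-right order `σ` on the involved tokens. -/
def SameSigma {n k : ℕ} {T : Type*} (q : Fin k → T × T) (f g : Fin n ≃ T) : Prop :=
  ∀ a b : T, Involved q a → Involved q b →
    (((f.symm a : ℕ) ≤ (f.symm b : ℕ)) ↔ ((g.symm a : ℕ) ≤ (g.symm b : ℕ)))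

namespace Stmt19Aux

variable {n k : ℕ} {T : Type*}

/-- inversion set of a permutation of `Fin n`. -/
def InvSet (π : Equiv.Perm (Fin n)) : Finset (Fin n × Fin n) :=
  Finset.univ.filter (fun pq => pq.1 < pq.2 ∧ π pq.2 < π pq.1)

def pinv (π : Equiv.Perm (Fin n)) : ℕ := (InvSet π).card

lemma swap_adj_lt (i j u v : Fin n) (hij : (i : ℕ) + 1 = (j : ℕ))
    (h1 : ¬(u = i ∧ v = j)) (h2 : ¬(u = j ∧ v = i)) :
    (Equiv.swap i j v < Equiv.swap i j u ↔ v < u) := by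
  rw [Equiv.swap_apply_def, Equiv.swap_apply_def]
  split_ifs <;> simp only [Fin.ext_iff, Fin.lt_def, not_and] at * <;> omega

lemma pinv_refl : pinv (Equiv.refl (Fin n)) = 0 := by
  rw [pinv, Finset.card_eq_zero, InvSet, Finset.filter_eq_empty_iff]
  rintro ⟨p, q⟩ _
  simp only [Equiv.refl_apply]
  rintro ⟨h1, h2⟩
  exact absurd h1 (not_lt.2 h2.le)

lemma lemA (π : Equiv.Perm (Fin n)) (i j : Fin n) (hij : (i : ℕ) + 1 = (j : ℕ)) :
    (π.symm i < π.symm j → pinv (π.trans (Equiv.swap i j)) = pinv π + 1) ∧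
    (π.symm j < π.symm i → pinv π = pinv (π.trans (Equiv.swap i j)) + 1) := by
  constructor
  · intro hlt
    have hkey : InvSet (π.trans (Equiv.swap i j)) = insert (π.symm i, π.symm j) (InvSet π) := by
      ext ⟨p, q⟩
      simp only [InvSet, Finset.mem_insert, Finset.mem_filter, Finset.mem_univ, true_and,
        Prod.mk.injEq]
      simp only [Equiv.trans_apply]
      constructor
      · rintro ⟨hpq, hsw⟩
        by_cases hc1 : π p = i ∧ π q = j
        · left
          exact ⟨by rw [← hc1.1]; simp, by rw [← hc1.2]; simp⟩
        · right
          refine ⟨hpq, ?_⟩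
          have hc2 : ¬(π p = j ∧ π q = i) := by
            rintro ⟨ha, hb⟩
            have hp : p = π.symm j := by rw [← ha]; simp
            have hq : q = π.symm i := by rw [← hb]; simp
            rw [hp, hq] at hpq
            exact absurd hpq (not_lt.2 hlt.le)
          exact (swap_adj_lt i j (π p) (π q) hij hc1 hc2).1 hsw
      · rintro (⟨hp, hq⟩ | ⟨hpq, hinv⟩)
        · subst hp; subst hq
          refine ⟨hlt, ?_⟩
          simp only [Equiv.apply_symm_apply, Equiv.swap_apply_left, Equiv.swap_apply_right]
          rw [Fin.lt_def]; omega
        · refine ⟨hpq, ?_⟩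
          have hc1 : ¬(π p = i ∧ π q = j) := by
            rintro ⟨ha, hb⟩
            rw [ha, hb, Fin.lt_def] at hinv; omega
          have hc2 : ¬(π p = j ∧ π q = i) := by
            rintro ⟨ha, hb⟩
            have hp : p = π.symm j := by rw [← ha]; simp
            have hq : q = π.symm i := by rw [← hb]; simp
            rw [hp, hq] at hpq
            exact absurd hpq (not_lt.2 hlt.le)
          exact (swap_adj_lt i j (π p) (π q) hij hc1 hc2).2 hinv
    have hnot : (π.symm i, π.symm j) ∉ InvSet π := by
      simp only [InvSet, Finset.mem_filter, Finset.mem_univ, true_and]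
      rintro ⟨-, h2⟩
      simp only [Equiv.apply_symm_apply] at h2
      rw [Fin.lt_def] at h2; omega
    rw [pinv, pinv, hkey, Finset.card_insert_of_notMem hnot]
  · intro hlt
    have hkey : InvSet π = insert (π.symm j, π.symm i) (InvSet (π.trans (Equiv.swap i j))) := by
      ext ⟨p, q⟩
      simp only [InvSet, Finset.mem_insert, Finset.mem_filter, Finset.mem_univ, true_and,
        Prod.mk.injEq]
      simp only [Equiv.trans_apply]
      constructor
      · rintro ⟨hpq, hsw⟩
        by_cases hc1 : π p = j ∧ π q = i
        · left
          exact ⟨by rw [← hc1.1]; simp, by rw [← hc1.2]; simp⟩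
        · right
          refine ⟨hpq, ?_⟩
          have hc2 : ¬(π p = i ∧ π q = j) := by
            rintro ⟨ha, hb⟩
            rw [ha, hb, Fin.lt_def] at hsw; omega
          exact (swap_adj_lt i j (π p) (π q) hij hc2 hc1).2 hsw
      · rintro (⟨hp, hq⟩ | ⟨hpq, hinv⟩)
        · subst hp; subst hq
          refine ⟨hlt, ?_⟩
          simp only [Equiv.apply_symm_apply]
          rw [Fin.lt_def]; omega
        · by_cases hc2 : π p = j ∧ π q = i
          · refine ⟨hpq, ?_⟩
            rw [hc2.1, hc2.2, Fin.lt_def]; omega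
          · refine ⟨hpq, ?_⟩
            have hc1 : ¬(π p = i ∧ π q = j) := by
              rintro ⟨ha, hb⟩
              have hp : p = π.symm i := by rw [← ha]; simp
              have hq : q = π.symm j := by rw [← hb]; simp
              rw [hp, hq] at hpq
              exact absurd hpq (not_lt.2 hlt.le)
            exact (swap_adj_lt i j (π p) (π q) hij hc1 hc2).1 hinv
    have hnot : (π.symm j, π.symm i) ∉ InvSet (π.trans (Equiv.swap i j)) := by
      simp only [InvSet, Finset.mem_filter, Finset.mem_univ, true_and]
      simp only [Equiv.trans_apply]
      rintro ⟨-, h2⟩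
      simp only [Equiv.apply_symm_apply, Equiv.swap_apply_left, Equiv.swap_apply_right] at h2
      rw [Fin.lt_def] at h2; omega
    rw [pinv, pinv, hkey, Finset.card_insert_of_notMem hnot]


-- a strictly monotone self-map of Fin n is ≥ id pointwise
lemma sm_le (f : Fin n → Fin n) (hf : StrictMono f) : ∀ p : Fin n, (p : ℕ) ≤ (f p : ℕ) := by
  have key : ∀ m : ℕ, ∀ p : Fin n, (p : ℕ) = m → (p : ℕ) ≤ (f p : ℕ) := by
    intro m
    induction m with
    | zero => intro p hp; omega
    | succ m ih =>
      intro p hp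
      have hlt : (⟨m, by omega⟩ : Fin n) < p := by rw [Fin.lt_def]; simp; omega
      have h1 := hf hlt
      have h2 := ih ⟨m, by omega⟩ (by simp)
      rw [Fin.lt_def] at h1
      simp at h2
      omega
  exact fun p => key _ p rfl

lemma sm_symm (π : Equiv.Perm (Fin n)) (hf : StrictMono (π : Fin n → Fin n)) :
    StrictMono (π.symm : Fin n → Fin n) := by
  intro p q hpq
  rcases lt_trichotomy (π.symm p) (π.symm q) with h | h | h
  · exact h
  · exact absurd (π.symm.injective h ▸ hpq) (lt_irrefl _)
  · have := hf h
    simp only [Equiv.apply_symm_apply] at this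
    exact absurd (this.trans hpq) (lt_irrefl _)

lemma sm_eq_id (π : Equiv.Perm (Fin n)) (hf : StrictMono (π : Fin n → Fin n)) :
    π = Equiv.refl (Fin n) := by
  ext p
  have h1 := sm_le π hf p
  have h2 := sm_le (π.symm : Fin n → Fin n) (sm_symm π hf) (π p)
  simp only [Equiv.symm_apply_apply] at h2
  simp only [Equiv.refl_apply]
  omega

-- existence of adjacent inverted values when pinv > 0
lemma exists_adj_desc (π : Equiv.Perm (Fin n)) (h : pinv π ≠ 0) :
    ∃ i j : Fin n, (i : ℕ) + 1 = (j : ℕ) ∧ π.symm j < π.symm i := by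
  by_contra hc
  push_neg at hc
  have hstep : ∀ i j : Fin n, (i : ℕ) + 1 = (j : ℕ) → π.symm i < π.symm j := by
    intro i j hij
    rcases lt_trichotomy (π.symm i) (π.symm j) with h1 | h1 | h1
    · exact h1
    · exfalso
      have := π.symm.injective h1
      rw [Fin.ext_iff] at this; omega
    · exact absurd h1 (by simpa using hc i j hij)
  have hmono : StrictMono (π.symm : Fin n → Fin n) := by
    have key : ∀ m : ℕ, ∀ a b : Fin n, (a : ℕ) + (m + 1) = (b : ℕ) → π.symm a < π.symm b := by
      intro m
      induction m with
      | zero => intro a b hab; exact hstep a b (by omega)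
      | succ m ih =>
        intro a b hab
        have hb : ((b : ℕ) - 1) < n := by omega
        have h1 := ih a ⟨(b : ℕ) - 1, hb⟩ (by simp; omega)
        have h2 := hstep ⟨(b : ℕ) - 1, hb⟩ b (by simp; omega)
        exact h1.trans h2
    intro a b hab
    rw [Fin.lt_def] at hab
    exact key ((b : ℕ) - (a : ℕ) - 1) a b (by omega)
  have hm2 : StrictMono (π : Fin n → Fin n) := by
    intro p q hpq
    rcases lt_trichotomy (π p) (π q) with h1 | h1 | h1
    · exact h1
    · exact absurd (π.injective h1 ▸ hpq) (lt_irrefl _)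
    · have := hmono h1
      simp only [Equiv.symm_apply_apply] at this
      exact absurd (this.trans hpq) (lt_irrefl _)
  apply h
  rw [pinv, Finset.card_eq_zero, InvSet, Finset.filter_eq_empty_iff]
  rintro ⟨p, q⟩ _ ⟨h1, h2⟩
  exact absurd (hm2 h1) (not_lt.2 h2.le)


lemma lemB : ∀ (N : ℕ) (π : Equiv.Perm (Fin n)), pinv π = N →
    ∃ G : ℕ → Equiv.Perm (Fin n), G 0 = π ∧ G N = Equiv.refl (Fin n) ∧
      ∀ t < N, ∃ i j : Fin n, (i : ℕ) + 1 = (j : ℕ) ∧ G (t + 1) = (G t).trans (Equiv.swap i j) := by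
  intro N
  induction N with
  | zero =>
    intro π hπ
    refine ⟨fun _ => π, rfl, ?_, fun t ht => absurd ht (by omega)⟩
    have hm : StrictMono (π : Fin n → Fin n) := by
      intro p q hpq
      rcases lt_trichotomy (π p) (π q) with h1 | h1 | h1
      · exact h1
      · exact absurd (π.injective h1 ▸ hpq) (lt_irrefl _)
      · exfalso
        have : (p, q) ∈ InvSet π := by
          simp [InvSet]; exact ⟨hpq, h1⟩
        rw [pinv, Finset.card_eq_zero] at hπ
        rw [hπ] at this
        simp at this
    exact sm_eq_id π hm
  | succ N ih =>
    intro π hπ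
    obtain ⟨i, j, hij, hdesc⟩ := exists_adj_desc π (by omega)
    have hA := (lemA π i j hij).2 hdesc
    obtain ⟨G', hG0, hGN, hGstep⟩ := ih (π.trans (Equiv.swap i j)) (by omega)
    refine ⟨fun t => if t = 0 then π else G' (t - 1), by simp, by simp [hGN], ?_⟩
    intro t ht
    rcases Nat.eq_zero_or_pos t with h0 | h0
    · subst h0
      exact ⟨i, j, hij, by simp [hG0]⟩
    · obtain ⟨i', j', hij', hstep⟩ := hGstep (t - 1) (by omega)
      refine ⟨i', j', hij', ?_⟩
      simp only [if_neg (by omega : ¬ t + 1 = 0), if_neg (by omega : ¬ t = 0)]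
      have : t + 1 - 1 = (t - 1) + 1 := by omega
      rw [this, hstep]


open Classical

def tok (q : Fin k → T × T) : Fin k × Bool → T := fun x => if x.2 then (q x.1).2 else (q x.1).1

lemma involved_iff (q : Fin k → T × T) (a : T) : Involved q a ↔ ∃ x, tok q x = a := by
  constructor
  · rintro ⟨i, h | h⟩
    · exact ⟨(i, false), h.symm⟩
    · exact ⟨(i, true), h.symm⟩
  · rintro ⟨⟨i, b⟩, h⟩
    cases b
    · exact ⟨i, Or.inl h.symm⟩
    · exact ⟨i, Or.inr h.symm⟩

def enc : Fin k × Bool → ℕ := fun x => 2 * (x.1 : ℕ) + (if x.2 then 1 else 0)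

lemma enc_lt (x : Fin k × Bool) : enc x < 2 * k := by
  have := x.1.isLt
  simp only [enc]
  split <;> omega

lemma enc_inj : Function.Injective (enc : Fin k × Bool → ℕ) := by
  rintro ⟨i, b⟩ ⟨i', b'⟩ h
  simp only [enc] at h
  have : (i : ℕ) = (i' : ℕ) ∧ b = b' := by
    cases b <;> cases b' <;> simp at h ⊢ <;> omega
  simp [Prod.ext_iff, Fin.ext_iff, this.1, this.2]

noncomputable def key (q : Fin k → T × T) (f : Fin n ≃ T) : Fin k × Bool → ℕ ×ₗ ℕ :=
  fun x => toLex ((f.symm (tok q x) : ℕ), enc x)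

lemma key_lt_iff (q : Fin k → T × T) (f : Fin n ≃ T) (x y : Fin k × Bool) :
    key q f x < key q f y ↔ ((f.symm (tok q x) : ℕ) < (f.symm (tok q y) : ℕ) ∨
      ((f.symm (tok q x) : ℕ) = (f.symm (tok q y) : ℕ) ∧ enc x < enc y)) := by
  rw [key, key]; exact Prod.Lex.lt_iff

lemma key_inj (q : Fin k → T × T) (f : Fin n ≃ T) : Function.Injective (key q f) := by
  intro x y h
  rw [key, key] at h
  have h2 := congrArg ofLex h
  simp only [ofLex_toLex, Prod.mk.injEq] at h2
  exact enc_inj h2.2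

noncomputable def R (q : Fin k → T × T) (f : Fin n ≃ T) : Fin k × Bool → ℕ :=
  fun x => (Finset.univ.filter (fun y => key q f y < key q f x)).card

lemma R_lt_iff (q : Fin k → T × T) (f : Fin n ≃ T) (x y : Fin k × Bool) :
    R q f x < R q f y ↔ key q f x < key q f y := by
  constructor
  · intro h
    rcases lt_trichotomy (key q f x) (key q f y) with h1 | h1 | h1
    · exact h1
    · exfalso; rw [R, R, key_inj q f h1] at h; omega
    · exfalso
      have : R q f y < R q f x := by
        apply Finset.card_lt_card
        constructor
        · intro z hz
          simp only [Finset.mem_filter, Finset.mem_univ, true_and] at hz ⊢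
          exact hz.trans h1
        · intro hsub
          have : y ∈ Finset.univ.filter (fun z => key q f z < key q f x) := by
            simp only [Finset.mem_filter, Finset.mem_univ, true_and]; exact h1
          have := hsub this
          simp only [Finset.mem_filter, Finset.mem_univ, true_and] at this
          exact absurd this (lt_irrefl _)
      omega
  · intro h1
    apply Finset.card_lt_card
    constructor
    · intro z hz
      simp only [Finset.mem_filter, Finset.mem_univ, true_and] at hz ⊢
      exact hz.trans h1
    · intro hsub
      have : x ∈ Finset.univ.filter (fun z => key q f z < key q f y) := by
        simp only [Finset.mem_filter, Finset.mem_univ, true_and]; exact h1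
      have := hsub this
      simp only [Finset.mem_filter, Finset.mem_univ, true_and] at this
      exact absurd this (lt_irrefl _)

lemma R_eq_iff (q : Fin k → T × T) (f : Fin n ≃ T) (x y : Fin k × Bool) :
    R q f x = R q f y ↔ x = y := by
  constructor
  · intro h
    rcases lt_trichotomy (key q f x) (key q f y) with h1 | h1 | h1
    · exact absurd h ((R_lt_iff q f x y).2 h1).ne
    · exact key_inj q f h1
    · exact absurd h.symm ((R_lt_iff q f y x).2 h1).ne
  · rintro rfl; rfl

lemma R_lt_card (q : Fin k → T × T) (f : Fin n ≃ T) (x : Fin k × Bool) :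
    R q f x < 2 * k := by
  have hsub : Finset.univ.filter (fun y => key q f y < key q f x) ⊆ Finset.univ.erase x := by
    intro z hz
    simp only [Finset.mem_filter, Finset.mem_univ, true_and] at hz
    simp only [Finset.mem_erase, Finset.mem_univ, and_true]
    intro h; rw [h] at hz; exact absurd hz (lt_irrefl _)
  have := Finset.card_le_card hsub
  rw [Finset.card_erase_of_mem (Finset.mem_univ x)] at this
  have hcard : Fintype.card (Fin k × Bool) = 2 * k := by simp [Fintype.card_prod]; ring
  have hk : 1 ≤ Fintype.card (Fin k × Bool) := Fintype.card_pos_iff.2 ⟨x⟩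
  rw [Finset.card_univ, hcard] at this
  rw [R]
  rw [hcard] at hk
  omega

lemma sameSigma_of_R_eq (q : Fin k → T × T) (f g : Fin n ≃ T) (hR : R q f = R q g) :
    SameSigma q f g := by
  intro a b ha hb
  obtain ⟨x, hx⟩ := (involved_iff q a).1 ha
  obtain ⟨y, hy⟩ := (involved_iff q b).1 hb
  subst hx; subst hy
  by_cases hxy : tok q x = tok q y
  · rw [hxy]; simp
  · have main : ∀ h : Fin n ≃ T, ((h.symm (tok q x) : ℕ) ≤ (h.symm (tok q y) : ℕ)) ↔
        key q h x < key q h y := by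
      intro h
      have hne : (h.symm (tok q x) : ℕ) ≠ (h.symm (tok q y) : ℕ) := by
        intro he
        exact hxy (h.symm.injective (Fin.ext he))
      rw [key_lt_iff]
      omega
    rw [main f, main g, ← R_lt_iff, ← R_lt_iff, hR]

noncomputable def Remb (q : Fin k → T × T) (f : Fin n ≃ T) : (Fin k × Bool) ↪ Fin (2 * k) :=
  ⟨fun x => ⟨R q f x, R_lt_card q f x⟩, by
    intro x y h
    rw [Fin.ext_iff] at h
    exact (R_eq_iff q f x y).1 h⟩

lemma card_emb : Fintype.card ((Fin k × Bool) ↪ Fin (2 * k)) = Nat.factorial (2 * k) := by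
  rw [Fintype.card_embedding_eq]
  have : Fintype.card (Fin k × Bool) = 2 * k := by simp [Fintype.card_prod]; ring
  rw [this, Fintype.card_fin, Nat.descFactorial_self]


lemma swap_adj_le (i j u v : Fin n) (hij : (i : ℕ) + 1 = (j : ℕ))
    (h1 : ¬(u = i ∧ v = j)) (h2 : ¬(u = j ∧ v = i)) :
    (((Equiv.swap i j u : Fin n) : ℕ) ≤ ((Equiv.swap i j v : Fin n) : ℕ) ↔ (u : ℕ) ≤ (v : ℕ)) := by
  rw [Equiv.swap_apply_def, Equiv.swap_apply_def]
  split_ifs <;> simp only [Fin.ext_iff, not_and] at * <;> omega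

variable [DecidableEq T]

lemma shortcut (q : Fin k → T × T) (l : ℕ) (F : ℕ → (Fin n ≃ T)) (idx : Fin k → ℕ)
    (hs : SwapSeq l F) (hmono : Monotone idx) (hle : ∀ i, idx i ≤ l)
    (hreal : ∀ i, Nat.dist ((F (idx i)).symm (q i).1 : ℕ) ((F (idx i)).symm (q i).2 : ℕ) = 1)
    (hmin : ∀ (l' : ℕ) (F' : ℕ → (Fin n ≃ T)), SwapSeq l' F' → F' 0 = F 0 →
      (∃ idx' : Fin k → ℕ, Monotone idx' ∧ (∀ i, idx' i ≤ l') ∧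
        ∀ i, Nat.dist ((F' (idx' i)).symm (q i).1 : ℕ)
          ((F' (idx' i)).symm (q i).2 : ℕ) = 1) →
      l ≤ l')
    (j1 j2 : ℕ) (h12 : j1 < j2) (hj2l : j2 ≤ l)
    (hch : ¬ SameSigma q (F j1) (F (j1 + 1)))
    (hss : SameSigma q (F j1) (F j2))
    (hsep : ∀ i, idx i ≤ j1 ∨ j2 ≤ idx i) : False := by
  classical
  set g : Fin n ≃ T := F j2 with hg
  set π : ℕ → Equiv.Perm (Fin n) := fun t => g.trans (F t).symm with hπdef
  -- step structure
  have hstep : ∀ t, t < l → ∃ i j : Fin n, (i : ℕ) + 1 = (j : ℕ) ∧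
      F (t + 1) = (Equiv.swap i j).trans (F t) ∧ π (t + 1) = (π t).trans (Equiv.swap i j) := by
    intro t ht
    obtain ⟨i, j, hij, hF⟩ := hs t ht
    refine ⟨i, j, hij, hF, ?_⟩
    ext p
    simp only [hπdef, Equiv.trans_apply, hF, Equiv.symm_trans_apply, Equiv.symm_swap]
  -- Lemma C : pinv (π t) ≤ j2 - t
  have hC : ∀ m t, t + m = j2 → pinv (π t) ≤ m := by
    intro m
    induction m with
    | zero =>
      intro t ht
      have ht2 : t = j2 := by omega
      rw [ht2]
      have hrefl : π j2 = Equiv.refl (Fin n) := by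
        simp only [hπdef]
        rw [hg]
        exact Equiv.self_trans_symm _
      rw [hrefl, pinv_refl]
    | succ m ih =>
      intro t ht
      obtain ⟨i, j, hij, hF, hπs⟩ := hstep t (by omega)
      have hne : (π t).symm i ≠ (π t).symm j := by
        intro h
        have := (π t).symm.injective h
        rw [Fin.ext_iff] at this; omega
      have h2 := ih (t + 1) (by omega)
      rcases lt_or_gt_of_ne hne with hlt | hgt
      · have := ((lemA (π t) i j hij).1 hlt)
        rw [← hπs] at this
        omega
      · have := ((lemA (π t) i j hij).2 hgt)
        rw [← hπs] at this
        omega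
  -- Lemma D : the change step at j1 increases inversions
  have hD : pinv (π (j1 + 1)) = pinv (π j1) + 1 := by
    obtain ⟨i, j, hij, hF, hπs⟩ := hstep j1 (by omega)
    rw [SameSigma] at hch
    push_neg at hch
    obtain ⟨a, b, ha, hb, hiff⟩ := hch
    have hsymm : ∀ c : T, (F (j1 + 1)).symm c = Equiv.swap i j ((F j1).symm c) := by
      intro c
      rw [hF]
      simp [Equiv.symm_trans_apply]
    rw [hsymm a, hsymm b] at hiff
    set u := (F j1).symm a with hu
    set v := (F j1).symm b with hv
    have hcase : (u = i ∧ v = j) ∨ (u = j ∧ v = i) := by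
      by_contra hcon
      have hcon1 : ¬(u = i ∧ v = j) := fun h => hcon (Or.inl h)
      have hcon2 : ¬(u = j ∧ v = i) := fun h => hcon (Or.inr h)
      have hpres := swap_adj_le i j u v hij hcon1 hcon2
      have h3 := hpres.1
      have h4 := hpres.2
      rcases hiff with ⟨ha2, hb2⟩ | ⟨ha2, hb2⟩
      · have := h4 ha2; omega
      · have := h3 hb2; omega
    have hπsymm : ∀ x : Fin n, (π j1).symm x = g.symm (F j1 x) := by
      intro x
      simp [hπdef, Equiv.symm_trans_apply]
    have hkey : (π j1).symm i < (π j1).symm j := by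
      rcases hcase with ⟨hui, hvj⟩ | ⟨huj, hvi⟩
      · have hai : F j1 i = a := by rw [← hui, hu]; simp
        have hbj : F j1 j = b := by rw [← hvj, hv]; simp
        have hab : a ≠ b := by
          intro h
          rw [← hai, ← hbj] at h
          have := (F j1).injective h
          rw [Fin.ext_iff] at this; omega
        have := (hss a b ha hb).1 (by rw [← hu, ← hv, hui, hvj]; omega)
        rw [hπsymm i, hπsymm j, hai, hbj, Fin.lt_def]
        have hne2 : (g.symm a : ℕ) ≠ (g.symm b : ℕ) := by
          intro h
          exact hab (g.symm.injective (Fin.ext h))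
        omega
      · have hai : F j1 i = b := by rw [← hvi, hv]; simp
        have hbj : F j1 j = a := by rw [← huj, hu]; simp
        have hab : b ≠ a := by
          intro h
          rw [← hai, ← hbj] at h
          have := (F j1).injective h
          rw [Fin.ext_iff] at this; omega
        have := (hss b a hb ha).1 (by rw [← hu, ← hv, huj, hvi]; omega)
        rw [hπsymm i, hπsymm j, hai, hbj, Fin.lt_def]
        have hne2 : (g.symm b : ℕ) ≠ (g.symm a : ℕ) := by
          intro h
          exact hab (g.symm.injective (Fin.ext h))
        omega
    have := (lemA (π j1) i j hij).1 hkey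
    rw [← hπs] at this
    exact this
  -- distance bounds
  have h1 : pinv (π (j1 + 1)) ≤ j2 - (j1 + 1) := hC (j2 - (j1 + 1)) (j1 + 1) (by omega)
  set d := pinv (π j1) with hd
  have hd2 : d + 2 ≤ j2 - j1 := by omega
  set e := j2 - j1 - d with he
  have hde : j1 + d + e = j2 := by omega
  have he2 : 2 ≤ e := by omega
  -- geodesic
  obtain ⟨G, hG0, hGd, hGstep⟩ := lemB d (π j1) rfl
  set H : ℕ → (Fin n ≃ T) := fun t => (G t).symm.trans g with hHdef
  have hH0 : H 0 = F j1 := by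
    ext x
    simp [hHdef, hG0, hπdef, Equiv.symm_trans_apply]
  have hHd : H d = g := by
    ext x
    simp [hHdef, hGd]
  have hHstep : ∀ t, t < d → AdjSwap (H t) (H (t + 1)) := by
    intro t ht
    obtain ⟨i, j, hij, hGs⟩ := hGstep t ht
    refine ⟨i, j, hij, ?_⟩
    ext x
    simp [hHdef, hGs, Equiv.symm_trans_apply, Equiv.symm_swap]
  -- the shortcut sequence
  set F' : ℕ → (Fin n ≃ T) := fun t => if t ≤ j1 then F t else if t - j1 ≤ d then H (t - j1) else F (t + e) with hF'def
  have hF'small : ∀ t, t ≤ j1 → F' t = F t := by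
    intro t ht; simp [hF'def, ht]
  have hF'mid : ∀ t, j1 ≤ t → t ≤ j1 + d → F' t = H (t - j1) := by
    intro t ht1 ht2
    rcases Nat.eq_or_lt_of_le ht1 with h | h
    · rw [hF'small t (le_of_eq h.symm), ← h]
      simp [hH0]
    · simp only [hF'def]
      rw [if_neg (by omega), if_pos (by omega)]
  have hF'big : ∀ t, j1 + d ≤ t → F' t = F (t + e) := by
    intro t ht
    by_cases h1 : t ≤ j1
    · have htj : t = j1 := by omega
      have hd0 : d = 0 := by omega
      rw [hF'small t h1, htj]
      have hfg : F j1 = g := by rw [← hH0, ← hHd, hd0]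
      rw [hfg]
      have hj1e : j1 + e = j2 := by omega
      rw [hj1e, ← hg]
    · by_cases h2 : t - j1 ≤ d
      · have htj : t = j1 + d := by omega
        rw [hF'mid t (by omega) (by omega), htj]
        simp only [Nat.add_sub_cancel_left]
        rw [hHd, hg]
        congr 1
        omega
      · simp only [hF'def]
        rw [if_neg h1, if_neg h2]
  have hel : e ≤ l := by omega
  -- it is a swap sequence
  have hss' : SwapSeq (l - e) F' := by
    intro t ht
    by_cases h1 : t < j1
    · rw [hF'small t (by omega), hF'small (t + 1) (by omega)]
      exact hs t (by omega)
    · by_cases h2 : t < j1 + d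
      · rw [hF'mid t (by omega) (by omega), hF'mid (t + 1) (by omega) (by omega)]
        have : t + 1 - j1 = (t - j1) + 1 := by omega
        rw [this]
        exact hHstep (t - j1) (by omega)
      · rw [hF'big t (by omega), hF'big (t + 1) (by omega)]
        have : t + 1 + e = (t + e) + 1 := by omega
        rw [this]
        exact hs (t + e) (by omega)
  have hF'0 : F' 0 = F 0 := hF'small 0 (by omega)
  -- realization data
  set idx' : Fin k → ℕ := fun i => if idx i ≤ j1 then idx i else idx i - e with hidx'def
  have hF'idx : ∀ i, F' (idx' i) = F (idx i) := by
    intro i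
    rcases hsep i with hsm | hbg
    · simp only [hidx'def, if_pos hsm]
      exact hF'small _ hsm
    · have hnot : ¬ idx i ≤ j1 := by omega
      simp only [hidx'def, if_neg hnot]
      rw [hF'big (idx i - e) (by omega)]
      congr 1
      omega
  have hmono' : Monotone idx' := by
    intro i i' hii
    have h := hmono hii
    simp only [hidx'def]
    split_ifs with ha hb hb
    · exact h
    · rcases hsep i' with hc | hc <;> omega
    · omega
    · omega
  have hle' : ∀ i, idx' i ≤ l - e := by
    intro i
    simp only [hidx'def]
    split_ifs with ha
    · omega
    · have := hle i
      omega
  have hreal' : ∀ i, Nat.dist ((F' (idx' i)).symm (q i).1 : ℕ) ((F' (idx' i)).symm (q i).2 : ℕ) = 1 := by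
    intro i
    rw [hF'idx i]
    exact hreal i
  have := hmin (l - e) F' hss' hF'0 ⟨idx', hmono', hle', hreal'⟩
  omega


end Stmt19Aux

open Classical in
/-- for a shortest feasible swap sequence `F 0 ~> ⋯ ~> F l` on a path for a
chain poset with `k` elements (gates `q i`, realized at monotone times `idx i`), the
signature length — the number of distinct realization times plus the number of steps at
which the left-to-right order of the involved tokens changes — is at most `((2k)! + 1)·k`. -/
theorem stmt19 {n k : ℕ} {T : Type*} [DecidableEq T]
    (q : Fin k → T × T) (l : ℕ) (F : ℕ → (Fin n ≃ T)) (idx : Fin k → ℕ)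
    (hs : SwapSeq l F) (hmono : Monotone idx) (hle : ∀ i, idx i ≤ l)
    (hreal : ∀ i, Nat.dist ((F (idx i)).symm (q i).1 : ℕ) ((F (idx i)).symm (q i).2 : ℕ) = 1)
    (hmin : ∀ (l' : ℕ) (F' : ℕ → (Fin n ≃ T)), SwapSeq l' F' → F' 0 = F 0 →
      (∃ idx' : Fin k → ℕ, Monotone idx' ∧ (∀ i, idx' i ≤ l') ∧
        ∀ i, Nat.dist ((F' (idx' i)).symm (q i).1 : ℕ)
          ((F' (idx' i)).symm (q i).2 : ℕ) = 1) →
      l ≤ l') :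
    (Finset.univ.image idx).card +
      ((Finset.range l).filter fun j => ¬ SameSigma q (F j) (F (j + 1))).card
      ≤ (Nat.factorial (2 * k) + 1) * k := by
  by_cases hk : k = 0
  · subst hk
    have himg : (Finset.univ.image idx) = ∅ := by
      rw [Finset.univ_eq_empty, Finset.image_empty]
    have hcs : ((Finset.range l).filter fun j => ¬ SameSigma q (F j) (F (j + 1))) = ∅ := by
      rw [Finset.filter_eq_empty_iff]
      intro j _
      rw [not_not]
      rintro a b ⟨i, -⟩
      exact i.elim0
    rw [himg, hcs]
    simp
  · have hk1 : 1 ≤ k := by omega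
    have hlastle : ∀ i : Fin k, idx i ≤ idx ⟨k - 1, by omega⟩ := by
      intro i
      apply hmono
      rw [Fin.le_def]
      simp
      omega
    have hl : l = idx ⟨k - 1, by omega⟩ := by
      have h1 := hmin (idx ⟨k - 1, by omega⟩) F
        (fun j hj => hs j (lt_of_lt_of_le hj (hle _))) rfl ⟨idx, hmono, hlastle, hreal⟩
      have h2 := hle ⟨k - 1, by omega⟩
      omega
    set S : Finset ℕ := insert 0 (Finset.image idx Finset.univ) with hSdef
    have hS0 : (0 : ℕ) ∈ S := Finset.mem_insert_self _ _
    have hSidx : ∀ i, idx i ∈ S :=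
      fun i => Finset.mem_insert_of_mem (Finset.mem_image_of_mem idx (Finset.mem_univ i))
    have hne : ∀ t : ℕ, (S.filter (· ≤ t)).Nonempty :=
      fun t => ⟨0, Finset.mem_filter.2 ⟨hS0, Nat.zero_le t⟩⟩
    set bkt : ℕ → ℕ := fun t => (S.filter (· ≤ t)).max' (hne t) with hbktdef
    have hbkt_mem : ∀ t, bkt t ∈ S ∧ bkt t ≤ t := by
      intro t
      have h := (S.filter (· ≤ t)).max'_mem (hne t)
      rw [Finset.mem_filter] at h
      exact h
    have hbkt_ge : ∀ t s', s' ∈ S → s' ≤ t → s' ≤ bkt t := by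
      intro t s' h1 h2
      exact Finset.le_max' (S.filter (· ≤ t)) s' (Finset.mem_filter.2 ⟨h1, h2⟩)
    set CS := ((Finset.range l).filter fun j => ¬ SameSigma q (F j) (F (j + 1))) with hCSdef
    have hCSprop : ∀ j ∈ CS, j < l ∧ ¬ SameSigma q (F j) (F (j + 1)) := by
      intro j hj
      rw [hCSdef, Finset.mem_filter, Finset.mem_range] at hj
      exact hj
    have hfib : CS.card = ∑ a ∈ S.filter (· < l), (CS.filter (fun j => bkt j = a)).card := by
      apply Finset.card_eq_sum_card_fiberwise
      intro j hj
      exact Finset.mem_filter.2 ⟨(hbkt_mem j).1, lt_of_le_of_lt (hbkt_mem j).2 (hCSprop j hj).1⟩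
    have hfibbd : ∀ a ∈ S.filter (· < l),
        (CS.filter (fun j => bkt j = a)).card ≤ Nat.factorial (2 * k) := by
      intro a ha
      have main : ∀ j1 j2 : ℕ, j1 ∈ CS.filter (fun j => bkt j = a) →
          j2 ∈ CS.filter (fun j => bkt j = a) →
          Stmt19Aux.R q (F j1) = Stmt19Aux.R q (F j2) → j1 < j2 → False := by
        intro j1 j2 hj1 hj2 hReq h12
        rw [Finset.mem_filter] at hj1 hj2
        have hb1 := hj1.2
        have hb2 := hj2.2
        have hc1 := hCSprop j1 hj1.1
        have hc2 := hCSprop j2 hj2.1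
        apply Stmt19Aux.shortcut q l F idx hs hmono hle hreal hmin j1 j2 h12 (le_of_lt hc2.1)
          hc1.2 (Stmt19Aux.sameSigma_of_R_eq q (F j1) (F j2) hReq)
        intro i
        by_cases hi : idx i ≤ j1
        · exact Or.inl hi
        · right
          by_contra hcon
          push_neg at hcon
          have h5 : idx i ≤ bkt j2 := hbkt_ge j2 (idx i) (hSidx i) (by omega)
          rw [hb2, ← hb1] at h5
          have h4 := (hbkt_mem j1).2
          omega
      have hinj : Set.InjOn (fun j => Stmt19Aux.Remb q (F j)) (CS.filter (fun j => bkt j = a)) := by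
        intro j1 hj1 j2 hj2 heq
        have hReq : ∀ j1 j2 : ℕ, Stmt19Aux.Remb q (F j1) = Stmt19Aux.Remb q (F j2) →
            Stmt19Aux.R q (F j1) = Stmt19Aux.R q (F j2) := by
          intro j1 j2 h
          funext x
          have := congrArg (fun e : (Fin k × Bool) ↪ Fin (2 * k) => ((e x : Fin (2 * k)) : ℕ)) h
          exact this
        rcases lt_trichotomy j1 j2 with h | h | h
        · exact absurd h (fun hh => main j1 j2 hj1 hj2 (hReq j1 j2 heq) hh)
        · exact h
        · exact absurd h (fun hh => main j2 j1 hj2 hj1 (hReq j2 j1 heq.symm) hh)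
      calc (CS.filter (fun j => bkt j = a)).card
          ≤ (Finset.univ : Finset ((Fin k × Bool) ↪ Fin (2 * k))).card :=
            Finset.card_le_card_of_injOn _ (fun _ _ => Finset.mem_univ _) hinj
        _ = Nat.factorial (2 * k) := by rw [Finset.card_univ, Stmt19Aux.card_emb]
    have hsum : ∑ a ∈ S.filter (· < l), (CS.filter (fun j => bkt j = a)).card
        ≤ (S.filter (· < l)).card * Nat.factorial (2 * k) := by
      have := Finset.sum_le_card_nsmul (S.filter (· < l)) _ (Nat.factorial (2 * k)) hfibbd
      simpa using this
    have hcardS : (S.filter (· < l)).card ≤ k := by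
      have hlS : l ∈ S := by rw [hl]; exact hSidx _
      have hsub : S.filter (· < l) ⊆ S.erase l := by
        intro b hb
        rw [Finset.mem_filter] at hb
        exact Finset.mem_erase.2 ⟨Nat.ne_of_lt hb.2, hb.1⟩
      have h1 := Finset.card_le_card hsub
      rw [Finset.card_erase_of_mem hlS] at h1
      have h2 : S.card ≤ k + 1 := by
        calc S.card ≤ (Finset.image idx Finset.univ).card + 1 := Finset.card_insert_le _ _
          _ ≤ k + 1 := by
            have h3 := Finset.card_image_le (f := idx) (s := Finset.univ)
            simp only [Finset.card_univ, Fintype.card_fin] at h3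
            omega
      omega
    have himg : (Finset.univ.image idx).card ≤ k := by
      have h3 := Finset.card_image_le (f := idx) (s := Finset.univ)
      simpa using h3
    have hCS : CS.card ≤ k * Nat.factorial (2 * k) := by
      rw [hfib]
      calc ∑ a ∈ S.filter (· < l), (CS.filter (fun j => bkt j = a)).card
          ≤ (S.filter (· < l)).card * Nat.factorial (2 * k) := hsum
        _ ≤ k * Nat.factorial (2 * k) := Nat.mul_le_mul_right _ hcardS
    have hfinal : (Nat.factorial (2 * k) + 1) * k = k * Nat.factorial (2 * k) + k := by ring
    rw [hfinal]
    omega
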